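/- For integers m > 0 and r ≥ 2, there exists a constant c > 0 such that for all sufficiently large n there is an r-uniform hypergraph on n vertices with at least c·n^{r−1+1/(m+1)} edges in which every set of m vertices spans at most m hyperedges. -/

import Mathlib

open Finset
open scoped Classical

/-- An `r`-graph on `Fin n` is `p`-sparse if every `p` vertices span at most `p` edges. -/
def Sparse (n p : ℕ) (G : Finset (Finset (Fin n))) : Prop :=
  ∀ S : Finset (Fin n), S.card = p → (G.filter (fun t => t ⊆ S)).card ≤ p

open Nat in
lemma trinomial_choose {N t K : ℕ} (hK : K ≤ t) (ht : t ≤ N) :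
    N.choose t * t.choose K = N.choose K * (N - K).choose (t - K) := by
  have h1 : K ≤ N := hK.trans ht
  have h2 : t - K ≤ N - K := Nat.sub_le_sub_right ht K
  have e1 : t.choose K * K ! * (t - K)! = t ! := Nat.choose_mul_factorial_mul_factorial hK
  have e2 : N.choose t * t ! * (N - t)! = N ! := Nat.choose_mul_factorial_mul_factorial ht
  have e3 : N.choose K * K ! * (N - K)! = N ! := Nat.choose_mul_factorial_mul_factorial h1
  have e4 : (N - K).choose (t - K) * (t - K)! * ((N - K) - (t - K))! = (N - K)! :=
    Nat.choose_mul_factorial_mul_factorial h2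
  have e5 : (N - K) - (t - K) = N - t := by omega
  rw [e5] at e4
  have key : (N.choose t * t.choose K) * (K ! * (t - K)! * (N - t)!)
      = (N.choose K * (N - K).choose (t - K)) * (K ! * (t - K)! * (N - t)!) := by
    calc (N.choose t * t.choose K) * (K ! * (t - K)! * (N - t)!)
        = N.choose t * (t.choose K * K ! * (t - K)!) * (N - t)! := by ring
      _ = N.choose t * t ! * (N - t)! := by rw [e1]
      _ = N ! := e2
      _ = N.choose K * K ! * (N - K)! := e3.symm
      _ = N.choose K * K ! * ((N - K).choose (t - K) * (t - K)! * (N - t)!) := by rw [e4]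
      _ = (N.choose K * (N - K).choose (t - K)) * (K ! * (t - K)! * (N - t)!) := by ring
  exact Nat.eq_of_mul_eq_mul_right (by positivity) key


open Nat in
lemma count_supersets {α : Type*} [DecidableEq α] (E F : Finset α) (t : ℕ) (hFE : F ⊆ E) :
    ((E.powersetCard t).filter (fun G => F ⊆ G)).card
      ≤ (E.card - F.card).choose (t - F.card) := by
  have h : ((E.powersetCard t).filter (fun G => F ⊆ G)).card
      ≤ ((E \ F).powersetCard (t - F.card)).card := by
    apply Finset.card_le_card_of_injOn (fun G => G \ F)
    · intro G hG
      simp only [mem_coe, mem_filter, mem_powersetCard] at hG ⊢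
      obtain ⟨⟨hGE, hGt⟩, hFG⟩ := hG
      refine ⟨sdiff_subset_sdiff hGE Subset.rfl, ?_⟩
      rw [card_sdiff_of_subset hFG, hGt]
    · intro a ha b hb hab
      simp only [coe_filter, Set.mem_setOf_eq, mem_coe, mem_filter] at ha hb
      have := congrArg (fun x => x ∪ F) hab
      simpa [sdiff_union_of_subset ha.2, sdiff_union_of_subset hb.2] using this
  rwa [card_powersetCard, card_sdiff_of_subset hFE] at h


open Nat in
lemma sparse_core (m r' n s : ℕ) (hm : 0 < m)
    (c1 : 1 ≤ n) (c2 : m + 1 ≤ n)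
    (c3 : 2 * (r' + 2) ≤ n)
    (c4 : 2 * m * (r' + 2)! + (r' + 2) ≤ n)
    (c5 : (2 ^ (r' + 2) * (r' + 2)!) ^ 2 ≤ n)
    (c6 : 2 * 2 ^ (2 ^ m) * (2 ^ (r' + 2 + 1) * (r' + 2)!) ^ (m + 1) ≤ n)
    (hs1 : 1 ≤ s) (hsn : s ^ (m + 1) ≤ n) :
    (m + 1 ≤ n ^ (r' + 1) * s) ∧ (n ^ (r' + 1) * s ≤ n.choose (r' + 2)) ∧
      ∀ Bc : ℕ, Bc ≤ n ^ m * 2 ^ (2 ^ m) →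
        2 * (Bc * ((n.choose (r' + 2) - (m + 1)).choose (n ^ (r' + 1) * s - (m + 1))))
          ≤ (n ^ (r' + 1) * s) * (n.choose (r' + 2)).choose (n ^ (r' + 1) * s) := by
  set r := r' + 2 with hrdef
  set B₀ : ℕ := 2 ^ (2 ^ m) with hB₀
  set Ec : ℕ := 2 ^ (r + 1) * r ! with hEc
  set K := m + 1 with hK
  set N₀ := n.choose r with hN₀
  set t := n ^ (r' + 1) * s with htdef
  -- basic descFactorial bound for N₀
  have hdesc : (n + 1 - r) ^ r ≤ r ! * N₀ := by
    have := Nat.pow_sub_le_descFactorial n r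
    rwa [Nat.descFactorial_eq_factorial_mul_choose] at this
  have h2n : n ≤ 2 * (n + 1 - r) := by omega
  have hpow : n ^ r ≤ 2 ^ r * r ! * N₀ := by
    calc n ^ r ≤ (2 * (n + 1 - r)) ^ r := Nat.pow_le_pow_left h2n r
      _ = 2 ^ r * (n + 1 - r) ^ r := mul_pow 2 _ r
      _ ≤ 2 ^ r * (r ! * N₀) := Nat.mul_le_mul_left _ hdesc
      _ = 2 ^ r * r ! * N₀ := by ring
  -- t ≤ N₀
  have hsmall : 2 ^ r * r ! * s ≤ n := by
    rcases le_or_gt s (2 ^ r * r !) with h | h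
    · calc 2 ^ r * r ! * s ≤ 2 ^ r * r ! * (2 ^ r * r !) := Nat.mul_le_mul_left _ h
        _ = (2 ^ r * r !) ^ 2 := (sq _).symm
        _ ≤ n := c5
    · have h2 : s ^ 2 ≤ s ^ (m + 1) := Nat.pow_le_pow_right hs1 (by omega)
      calc 2 ^ r * r ! * s ≤ s * s := Nat.mul_le_mul_right _ (le_of_lt h)
        _ = s ^ 2 := (sq s).symm
        _ ≤ n := h2.trans hsn
  have htN : t ≤ N₀ := by
    have key : 2 ^ r * r ! * t ≤ 2 ^ r * r ! * N₀ := by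
      calc 2 ^ r * r ! * t = n ^ (r' + 1) * (2 ^ r * r ! * s) := by rw [htdef]; ring
        _ ≤ n ^ (r' + 1) * n := Nat.mul_le_mul_left _ hsmall
        _ = n ^ r := by rw [hrdef]; ring
        _ ≤ 2 ^ r * r ! * N₀ := hpow
    exact Nat.le_of_mul_le_mul_left key (by positivity)
  have hKt : K ≤ t := by
    calc K ≤ n := c2
      _ ≤ n ^ (r' + 1) := Nat.le_self_pow (by omega) n
      _ ≤ t := Nat.le_mul_of_pos_right _ hs1
  refine ⟨hKt, htN, ?_⟩
  -- L and its bounds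
  have hN2m : 2 * m ≤ N₀ := by
    have h1 : 2 * m * r ! ≤ n + 1 - r := by omega
    have h2 : n + 1 - r ≤ (n + 1 - r) ^ r := Nat.le_self_pow (by omega) _
    have h3 : 2 * m * r ! ≤ r ! * N₀ := h1.trans (h2.trans hdesc)
    have h4 : (2 * m) * r ! ≤ N₀ * r ! := by
      calc (2 * m) * r ! = 2 * m * r ! := by ring
        _ ≤ r ! * N₀ := h3
        _ = N₀ * r ! := by ring
    exact Nat.le_of_mul_le_mul_right h4 (Nat.factorial_pos r)
  set L := N₀ + 1 - K with hL
  have hEL : n ^ r ≤ Ec * L := by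
    have hLN : N₀ ≤ 2 * L := by omega
    calc n ^ r ≤ 2 ^ r * r ! * N₀ := hpow
      _ ≤ 2 ^ r * r ! * (2 * L) := Nat.mul_le_mul_left _ hLN
      _ = Ec * L := by rw [hEc]; ring
  have hsm : s ^ m ≤ n := by
    calc s ^ m ≤ s ^ (m + 1) := Nat.pow_le_pow_right hs1 (by omega)
      _ ≤ n := hsn
  have hf2 : 2 * B₀ * Ec ^ (m + 1) * s ^ m ≤ n ^ r := by
    calc 2 * B₀ * Ec ^ (m + 1) * s ^ m ≤ n * n := Nat.mul_le_mul c6 hsm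
      _ = n ^ 2 := (sq n).symm
      _ ≤ n ^ r := Nat.pow_le_pow_right c1 (by omega)
  -- core inequality
  have hcoreA : 2 * B₀ * n ^ m * t ^ m ≤ L ^ (m + 1) := by
    have key : Ec ^ (m + 1) * (2 * B₀ * n ^ m * t ^ m) ≤ Ec ^ (m + 1) * L ^ (m + 1) := by
      calc Ec ^ (m + 1) * (2 * B₀ * n ^ m * t ^ m)
          = (2 * B₀ * Ec ^ (m + 1) * s ^ m) * (n ^ r) ^ m := by
            rw [htdef, hrdef]; ring
        _ ≤ n ^ r * (n ^ r) ^ m := Nat.mul_le_mul_right _ hf2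
        _ = (n ^ r) ^ (m + 1) := by ring
        _ ≤ (Ec * L) ^ (m + 1) := Nat.pow_le_pow_left hEL _
        _ = Ec ^ (m + 1) * L ^ (m + 1) := mul_pow _ _ _
    exact Nat.le_of_mul_le_mul_left key (by positivity)
  have hcore : 2 * B₀ * n ^ m * t ^ (m + 1) ≤ t * L ^ (m + 1) := by
    calc 2 * B₀ * n ^ m * t ^ (m + 1) = t * (2 * B₀ * n ^ m * t ^ m) := by ring
      _ ≤ t * L ^ (m + 1) := Nat.mul_le_mul_left _ hcoreA
  -- star inequality
  have hstar : ∀ Bc : ℕ, Bc ≤ n ^ m * B₀ → 2 * Bc * t.choose K ≤ t * N₀.choose K := by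
    intro Bc hBc
    have key : (2 * Bc * t.choose K) * K ! ≤ (t * N₀.choose K) * K ! := by
      calc (2 * Bc * t.choose K) * K ! = 2 * Bc * (K ! * t.choose K) := by ring
        _ = 2 * Bc * t.descFactorial K := by rw [Nat.descFactorial_eq_factorial_mul_choose]
        _ ≤ 2 * (n ^ m * B₀) * t ^ K := by
            apply Nat.mul_le_mul (by omega) (Nat.descFactorial_le_pow t K)
        _ = 2 * B₀ * n ^ m * t ^ (m + 1) := by rw [hK]; ring
        _ ≤ t * L ^ (m + 1) := hcore
        _ = t * (N₀ + 1 - K) ^ K := by rw [hL, hK]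
        _ ≤ t * N₀.descFactorial K := Nat.mul_le_mul_left _ (Nat.pow_sub_le_descFactorial N₀ K)
        _ = (t * N₀.choose K) * K ! := by
            rw [Nat.descFactorial_eq_factorial_mul_choose]; ring
    exact Nat.le_of_mul_le_mul_right key (Nat.factorial_pos K)
  -- conclusion via trinomial identity
  intro Bc hBc
  have hid : N₀.choose t * t.choose K = N₀.choose K * (N₀ - K).choose (t - K) :=
    trinomial_choose hKt htN
  have key : (2 * (Bc * (N₀ - K).choose (t - K))) * t.choose K
      ≤ ((n ^ (r' + 1) * s) * N₀.choose t) * t.choose K := by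
    calc (2 * (Bc * (N₀ - K).choose (t - K))) * t.choose K
        = (2 * Bc * t.choose K) * (N₀ - K).choose (t - K) := by ring
      _ ≤ (t * N₀.choose K) * (N₀ - K).choose (t - K) :=
          Nat.mul_le_mul_right _ (hstar Bc (by rw [hB₀]; exact hBc))
      _ = t * (N₀.choose K * (N₀ - K).choose (t - K)) := by ring
      _ = t * (N₀.choose t * t.choose K) := by rw [hid]
      _ = ((n ^ (r' + 1) * s) * N₀.choose t) * t.choose K := by rw [htdef]; ring
  exact Nat.le_of_mul_le_mul_right key (Nat.choose_pos hKt)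

open Nat in
lemma sparse_select (m r' n : ℕ) (hm : 0 < m) (c1 : 1 ≤ n) (c2 : m + 1 ≤ n) (s : ℕ) (hs1 : 1 ≤ s)
    (hKt : m + 1 ≤ n ^ (r' + 1) * s)
    (htN : n ^ (r' + 1) * s ≤ n.choose (r' + 2))
    (hnum : ∀ Bc : ℕ, Bc ≤ n ^ m * 2 ^ (2 ^ m) →
        2 * (Bc * ((n.choose (r' + 2) - (m + 1)).choose (n ^ (r' + 1) * s - (m + 1))))
          ≤ (n ^ (r' + 1) * s) * (n.choose (r' + 2)).choose (n ^ (r' + 1) * s)) :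
    ∃ G : Finset (Finset (Fin n)), (∀ e ∈ G, e.card = r' + 2) ∧ Sparse n m G ∧
      n ^ (r' + 1) * s ≤ 2 * G.card := by
  set r := r' + 2 with hrdef
  set K := m + 1 with hKdef
  set t := n ^ (r' + 1) * s with htdef
  set E := powersetCard r (univ : Finset (Fin n)) with hEdef
  have hEcard : E.card = n.choose r := by
    rw [hEdef, card_powersetCard, Finset.card_fin]
  set Bad := (E.powersetCard K).filter (fun F => (F.sup id).card ≤ m) with hBaddef
  -- bound on Bad.card
  have hBadcard : Bad.card ≤ n ^ m * 2 ^ (2 ^ m) := by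
    have hsub : Bad ⊆ (powersetCard m (univ : Finset (Fin n))).biUnion
        (fun S => S.powerset.powerset) := by
      intro F hF
      rw [hBaddef, mem_filter, mem_powersetCard] at hF
      obtain ⟨⟨hFE, hFK⟩, hFm⟩ := hF
      obtain ⟨S, hS1, hS2⟩ := Finset.exists_superset_card_eq hFm
        (by rw [Fintype.card_fin]; omega)
      rw [mem_biUnion]
      refine ⟨S, ?_, ?_⟩
      · rw [mem_powersetCard]; exact ⟨subset_univ S, hS2⟩
      · rw [mem_powerset]
        intro e he
        rw [mem_powerset]
        exact (Finset.le_sup (f := id) he).trans hS1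
    calc Bad.card ≤ ((powersetCard m (univ : Finset (Fin n))).biUnion
          (fun S => S.powerset.powerset)).card := card_le_card hsub
      _ ≤ ∑ S ∈ powersetCard m (univ : Finset (Fin n)), S.powerset.powerset.card :=
          card_biUnion_le
      _ = ∑ S ∈ powersetCard m (univ : Finset (Fin n)), 2 ^ (2 ^ m) := by
          apply Finset.sum_congr rfl
          intro S hS
          rw [mem_powersetCard] at hS
          rw [card_powerset, card_powerset, hS.2]
      _ = n.choose m * 2 ^ (2 ^ m) := by
          rw [Finset.sum_const, card_powersetCard, Finset.card_fin, smul_eq_mul]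
      _ ≤ n ^ m * 2 ^ (2 ^ m) := by
          apply Nat.mul_le_mul_right
          calc n.choose m ≤ n.descFactorial m := by
                rw [Nat.descFactorial_eq_factorial_mul_choose]
                exact Nat.le_mul_of_pos_left _ (Nat.factorial_pos m)
            _ ≤ n ^ m := Nat.descFactorial_le_pow n m
  -- double counting over all t-subsets of E
  set T := E.powersetCard t with hTdef
  have hTcard : T.card = (n.choose r).choose t := by rw [hTdef, card_powersetCard, hEcard]
  have hTne : T.Nonempty := by
    rw [← Finset.card_pos, hTcard]
    exact Nat.choose_pos htN
  have hsum : ∑ G ∈ T, (Bad.filter (fun F => F ⊆ G)).card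
      ≤ Bad.card * (n.choose r - K).choose (t - K) := by
    have e1 : ∑ G ∈ T, (Bad.filter (fun F => F ⊆ G)).card
        = ∑ F ∈ Bad, (T.filter (fun G => F ⊆ G)).card := by
      simp only [card_filter]
      exact Finset.sum_comm
    rw [e1]
    calc ∑ F ∈ Bad, (T.filter (fun G => F ⊆ G)).card
        ≤ ∑ F ∈ Bad, (n.choose r - K).choose (t - K) := by
          apply Finset.sum_le_sum
          intro F hF
          rw [hBaddef, mem_filter, mem_powersetCard] at hF
          have := count_supersets E F t hF.1.1
          rwa [hEcard, hF.1.2] at this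
      _ = Bad.card * (n.choose r - K).choose (t - K) := by
          rw [Finset.sum_const, smul_eq_mul]
  obtain ⟨G, hGT, hGmin⟩ := Finset.exists_min_image T
    (fun G => (Bad.filter (fun F => F ⊆ G)).card) hTne
  set badG := (Bad.filter (fun F => F ⊆ G)).card with hbadGdef
  have havg : badG * (n.choose r).choose t ≤ Bad.card * (n.choose r - K).choose (t - K) := by
    calc badG * (n.choose r).choose t = ∑ _G ∈ T, badG := by rw [Finset.sum_const, smul_eq_mul, hTcard]; ring
      _ ≤ ∑ G' ∈ T, (Bad.filter (fun F => F ⊆ G')).card := Finset.sum_le_sum hGmin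
      _ ≤ _ := hsum
  have hbad2 : 2 * badG ≤ t := by
    have h1 : (2 * badG) * (n.choose r).choose t ≤ t * (n.choose r).choose t := by
      calc (2 * badG) * (n.choose r).choose t = 2 * (badG * (n.choose r).choose t) := by ring
        _ ≤ 2 * (Bad.card * (n.choose r - K).choose (t - K)) := by omega
        _ ≤ t * (n.choose r).choose t := hnum Bad.card hBadcard
    exact Nat.le_of_mul_le_mul_right h1 (Nat.choose_pos htN)
  -- the deletion
  have hGE : G ⊆ E := (mem_powersetCard.mp hGT).1
  have hGcard : G.card = t := (mem_powersetCard.mp hGT).2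
  classical
  set del := (Bad.filter (fun F => F ⊆ G)).image
    (fun F => if h : F.Nonempty then h.choose else ∅) with hdeldef
  have hpickmem : ∀ F ∈ Bad, (if h : F.Nonempty then h.choose else ∅) ∈ F := by
    intro F hF
    rw [hBaddef, mem_filter, mem_powersetCard] at hF
    have hFne : F.Nonempty := by
      rw [← Finset.card_pos, hF.1.2]; omega
    rw [dif_pos hFne]
    exact hFne.choose_spec
  set G' := G \ del with hG'def
  refine ⟨G', ?_, ?_, ?_⟩
  · intro e he
    have : e ∈ E := hGE ((sdiff_subset) he)
    rw [hEdef, mem_powersetCard] at this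
    exact this.2
  · intro S hS
    by_contra hcon
    push_neg at hcon
    obtain ⟨F, hFsub, hFcard⟩ := Finset.exists_subset_card_eq (s := G'.filter (fun e => e ⊆ S)) (n := K) hcon
    have hFG' : F ⊆ G' := hFsub.trans (filter_subset _ _)
    have hFG : F ⊆ G := hFG'.trans (sdiff_subset)
    have hFBad : F ∈ Bad := by
      rw [hBaddef, mem_filter, mem_powersetCard]
      refine ⟨⟨hFG.trans hGE, hFcard⟩, ?_⟩
      have hsup : F.sup id ≤ S :=
        Finset.sup_le fun e he => Finset.le_iff_subset.mpr (mem_filter.mp (hFsub he)).2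
      calc (F.sup id).card ≤ S.card := card_le_card (Finset.le_iff_subset.mp hsup)
        _ = m := hS
    have hmem : (if h : F.Nonempty then h.choose else ∅) ∈ del := by
      rw [hdeldef, mem_image]
      exact ⟨F, mem_filter.mpr ⟨hFBad, hFG⟩, rfl⟩
    have hmem2 : (if h : F.Nonempty then h.choose else ∅) ∈ G' := hFG' (hpickmem F hFBad)
    rw [hG'def, mem_sdiff] at hmem2
    exact hmem2.2 hmem
  · have hdelcard : del.card ≤ badG := by
      rw [hdeldef, hbadGdef]
      exact card_image_le
    have hG'card : G.card - del.card ≤ G'.card := le_card_sdiff del G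
    rw [hGcard] at hG'card
    omega

open Nat Real in
/-- There exist `m`-sparse `r`-graphs on `n` vertices with `Ω(n^{r-1+1/(m+1)})` edges. -/
theorem exists_sparse_dense_hypergraph (m r : ℕ) (hm : 0 < m) (hr : 2 ≤ r) :
    ∃ c : ℝ, 0 < c ∧ ∃ N : ℕ, ∀ n ≥ N,
      ∃ G : Finset (Finset (Fin n)), (∀ s ∈ G, s.card = r) ∧ Sparse n m G ∧
        c * (n : ℝ) ^ ((r : ℝ) - 1 + 1 / ((m : ℝ) + 1)) ≤ (G.card : ℝ) := by
  obtain ⟨r', rfl⟩ : ∃ r', r = r' + 2 := ⟨r - 2, by omega⟩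
  refine ⟨1/4, by norm_num, ?_⟩
  refine ⟨2 * 2 ^ (2 ^ m) * (2 ^ (r' + 2 + 1) * (r' + 2)!) ^ (m + 1)
    + (2 ^ (r' + 2) * (r' + 2)!) ^ 2 + 2 * m * (r' + 2)! + 3 * (r' + 2) + m + 2, ?_⟩
  intro n hn
  have c1 : 1 ≤ n := by omega
  have c2 : m + 1 ≤ n := by omega
  have c3 : 2 * (r' + 2) ≤ n := by omega
  have c4 : 2 * m * (r' + 2)! + (r' + 2) ≤ n := by omega
  have c5 : (2 ^ (r' + 2) * (r' + 2)!) ^ 2 ≤ n := by omega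
  have c6 : 2 * 2 ^ (2 ^ m) * (2 ^ (r' + 2 + 1) * (r' + 2)!) ^ (m + 1) ≤ n := by omega
  -- choose s ≈ n^{1/(m+1)}
  set x : ℝ := (n : ℝ) ^ ((1 : ℝ) / ((m : ℝ) + 1)) with hxdef
  have hn0 : (0:ℝ) < n := by exact_mod_cast c1
  have hx0 : 0 ≤ x := Real.rpow_nonneg (le_of_lt hn0) _
  have hxpow : x ^ (m + 1) = n := by
    rw [hxdef, ← Real.rpow_natCast ((n:ℝ) ^ ((1:ℝ)/((m:ℝ)+1))) (m+1),
      ← Real.rpow_mul (le_of_lt hn0)]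
    rw [show (1:ℝ)/((m:ℝ)+1) * ((m+1 : ℕ) : ℝ) = 1 by push_cast; field_simp]
    exact Real.rpow_one _
  set s : ℕ := ⌊x⌋₊ with hsdef
  have hs1 : 1 ≤ s := by
    rw [hsdef]
    exact Nat.le_floor (by
      rw [Nat.cast_one]
      exact Real.one_le_rpow (by exact_mod_cast c1) (by positivity))
  have hsn : s ^ (m + 1) ≤ n := by
    have h1 : ((s : ℝ)) ^ (m+1) ≤ x ^ (m+1) :=
      pow_le_pow_left₀ (by positivity) (Nat.floor_le hx0) _
    rw [hxpow] at h1
    exact_mod_cast h1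
  have hxlt : x < s + 1 := Nat.lt_floor_add_one x
  obtain ⟨hKt, htN, hnum⟩ := sparse_core m r' n s hm c1 c2 c3 c4 c5 c6 hs1 hsn
  obtain ⟨G, hGr, hGsp, hGcard⟩ := sparse_select m r' n hm c1 c2 s hs1 hKt htN hnum
  refine ⟨G, hGr, hGsp, ?_⟩
  -- real arithmetic
  have hcast : ((n ^ (r' + 1) * s : ℕ) : ℝ) ≤ 2 * (G.card : ℝ) := by
    exact_mod_cast hGcard
  have hsplit : (n : ℝ) ^ (((r' + 2 : ℕ) : ℝ) - 1 + 1 / ((m : ℝ) + 1))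
      = (n : ℝ) ^ ((r' + 1 : ℕ) : ℕ) * x := by
    rw [Real.rpow_add hn0, hxdef]
    congr 1
    rw [show ((r' + 2 : ℕ) : ℝ) - 1 = ((r' + 1 : ℕ) : ℝ) by push_cast; ring]
    exact Real.rpow_natCast _ _
  rw [hsplit]
  have hx2s : x ≤ 2 * (s : ℝ) := by
    have : (1:ℝ) ≤ s := by exact_mod_cast hs1
    nlinarith [hxlt]
  have hp0 : (0:ℝ) ≤ (n : ℝ) ^ (r' + 1 : ℕ) := by positivity
  have h1 : (n : ℝ) ^ (r' + 1 : ℕ) * x ≤ (n : ℝ) ^ (r' + 1 : ℕ) * (2 * s) :=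
    mul_le_mul_of_nonneg_left hx2s hp0
  have h2 : ((n ^ (r' + 1) * s : ℕ) : ℝ) = (n : ℝ) ^ (r' + 1 : ℕ) * s := by push_cast; ring
  nlinarith [hcast, h1, h2.symm.le, h2.le]
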